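/- arXiv:2301.05729 — 11 statements merged into one kernel-verified Lean document; each statement's English description precedes it below -/
import Mathlib

section
/- Let Nl and Nh be finite index types, ρ : ℝ, and let Kl : Matrix Nl Nl ℝ, Kr : Matrix Nh Nh ℝ be invertible real matrices (their determinants are units), and E : Matrix Nl Nh ℝ an arbitrary matrix. Define the (autoregression joint covariance) block matrix Σ = fromBlocks Kl (ρ • (Kl * E)) (ρ • (Eᵀ * Kl)) (ρ² • (Eᵀ * Kl * E) + Kr) and the block matrix N = fromBlocks (Kl⁻¹ + ρ² • (E * Kr⁻¹ * Eᵀ)) (-(ρ • (E * Kr⁻¹))) (-(ρ • (Kr⁻¹ * Eᵀ))) Kr⁻¹. Then Σ * N = 1 and N * Σ = 1; in particular Σ is invertible with Σ⁻¹ = N. -/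
open Matrix

theorem ar_joint_covariance_inverse {Nl Nh : Type*}
    [Fintype Nl] [Fintype Nh] [DecidableEq Nl] [DecidableEq Nh]
    (ρ : ℝ) (Kl : Matrix Nl Nl ℝ) (Kr : Matrix Nh Nh ℝ) (E : Matrix Nl Nh ℝ)
    (hKl : IsUnit Kl.det) (hKr : IsUnit Kr.det) :
    let Cov : Matrix (Nl ⊕ Nh) (Nl ⊕ Nh) ℝ :=
      fromBlocks Kl (ρ • (Kl * E)) (ρ • (Eᵀ * Kl)) (ρ ^ 2 • (Eᵀ * Kl * E) + Kr)
    let N : Matrix (Nl ⊕ Nh) (Nl ⊕ Nh) ℝ :=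
      fromBlocks (Kl⁻¹ + ρ ^ 2 • (E * Kr⁻¹ * Eᵀ)) (-(ρ • (E * Kr⁻¹)))
        (-(ρ • (Kr⁻¹ * Eᵀ))) Kr⁻¹
    Cov * N = 1 ∧ N * Cov = 1 ∧ IsUnit Cov.det ∧ Cov⁻¹ = N := by
  intro Cov N
  have hl := Matrix.mul_nonsing_inv _ hKl
  have hl' := Matrix.nonsing_inv_mul _ hKl
  have hr := Matrix.mul_nonsing_inv _ hKr
  have hr' := Matrix.nonsing_inv_mul _ hKr
  have e1 : Kr * (Kr⁻¹ * Eᵀ) = Eᵀ := Matrix.mul_nonsing_inv_cancel_left _ _ hKr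
  have e2 : Kl⁻¹ * (Kl * E) = E := Matrix.nonsing_inv_mul_cancel_left _ _ hKl
  have h1 : Cov * N = 1 := by
    show fromBlocks _ _ _ _ * fromBlocks _ _ _ _ = 1
    rw [fromBlocks_multiply]
    simp only [Matrix.mul_add, Matrix.add_mul, Matrix.mul_smul, Matrix.smul_mul,
      Matrix.mul_neg, Matrix.neg_mul, Matrix.mul_assoc, hl, hl', hr, hr',
      e1, e2, smul_smul, pow_two, Matrix.mul_one, Matrix.one_mul]
    rw [← fromBlocks_one]
    refine Matrix.ext fun i j => ?_
    cases i <;> cases j <;> simp [fromBlocks] <;> ring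
  have h2 : N * Cov = 1 := by
    show fromBlocks _ _ _ _ * fromBlocks _ _ _ _ = 1
    rw [fromBlocks_multiply]
    simp only [Matrix.mul_add, Matrix.add_mul, Matrix.mul_smul, Matrix.smul_mul,
      Matrix.mul_neg, Matrix.neg_mul, Matrix.mul_assoc, hl, hl', hr, hr',
      e1, e2, smul_smul, pow_two, Matrix.mul_one, Matrix.one_mul]
    rw [← fromBlocks_one]
    refine Matrix.ext fun i j => ?_
    cases i <;> cases j <;> simp [fromBlocks] <;> ring
  exact ⟨h1, h2, Matrix.isUnit_det_of_right_inverse h1, Matrix.inv_eq_right_inv h1⟩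
end

section
/- Let Nl and Nh be finite index types, ρ : ℝ, Kl : Matrix Nl Nl ℝ and Kr : Matrix Nh Nh ℝ invertible real matrices, and E : Matrix Nl Nh ℝ. Define Σ = fromBlocks Kl (ρ • (Kl * E)) (ρ • (Eᵀ * Kl)) (ρ² • (Eᵀ * Kl * E) + Kr). For any vectors Yl : Nl → ℝ and Yr : Nh → ℝ, let y : (Nl ⊕ Nh) → ℝ be the concatenated vector whose first block is Yl and whose second block is ρ • (Eᵀ.mulVec Yl) + Yr. Then the quadratic form decomposes as y ⬝ᵥ (Σ⁻¹.mulVec y) = Yl ⬝ᵥ (Kl⁻¹.mulVec Yl) + Yr ⬝ᵥ (Kr⁻¹.mulVec Yr). -/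
open Matrix

theorem ar_quadratic_form_decomposition {Nl Nh : Type*}
    [Fintype Nl] [Fintype Nh] [DecidableEq Nl] [DecidableEq Nh]
    (ρ : ℝ) (Kl : Matrix Nl Nl ℝ) (Kr : Matrix Nh Nh ℝ) (E : Matrix Nl Nh ℝ)
    (hKl : IsUnit Kl.det) (hKr : IsUnit Kr.det)
    (Yl : Nl → ℝ) (Yr : Nh → ℝ) :
    let Cov : Matrix (Nl ⊕ Nh) (Nl ⊕ Nh) ℝ :=
      fromBlocks Kl (ρ • (Kl * E)) (ρ • (Eᵀ * Kl)) (ρ ^ 2 • (Eᵀ * Kl * E) + Kr)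
    let y : (Nl ⊕ Nh) → ℝ := Sum.elim Yl (ρ • (Eᵀ.mulVec Yl) + Yr)
    y ⬝ᵥ (Cov⁻¹.mulVec y) = Yl ⬝ᵥ (Kl⁻¹.mulVec Yl) + Yr ⬝ᵥ (Kr⁻¹.mulVec Yr) := by
  intro Cov y
  set L : Matrix (Nl ⊕ Nh) (Nl ⊕ Nh) ℝ := fromBlocks 1 0 (ρ • Eᵀ) 1 with hL
  set Li : Matrix (Nl ⊕ Nh) (Nl ⊕ Nh) ℝ := fromBlocks 1 0 (-(ρ • Eᵀ)) 1 with hLi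
  set D : Matrix (Nl ⊕ Nh) (Nl ⊕ Nh) ℝ := fromBlocks Kl 0 0 Kr with hD
  have hLiL : Li * L = 1 := by
    rw [hL, hLi, Matrix.fromBlocks_multiply, ← Matrix.fromBlocks_one]
    congr 1 <;> simp
  have hLLi : L * Li = 1 := by
    rw [hL, hLi, Matrix.fromBlocks_multiply, ← Matrix.fromBlocks_one]
    congr 1 <;> simp
  have hLinv : L⁻¹ = Li := Matrix.inv_eq_right_inv hLLi
  have hDinv : D⁻¹ = fromBlocks Kl⁻¹ 0 0 Kr⁻¹ := by
    apply Matrix.inv_eq_right_inv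
    rw [hD, Matrix.fromBlocks_multiply, ← Matrix.fromBlocks_one]
    congr 1 <;> simp [Matrix.mul_nonsing_inv _ hKl, Matrix.mul_nonsing_inv _ hKr]
  have hCov : Cov = L * D * Lᵀ := by
    show fromBlocks Kl (ρ • (Kl * E)) (ρ • (Eᵀ * Kl)) (ρ ^ 2 • (Eᵀ * Kl * E) + Kr) = _
    rw [hL, hD, Matrix.fromBlocks_transpose, Matrix.fromBlocks_multiply,
      Matrix.fromBlocks_multiply]
    congr 1 <;> simp [Matrix.mul_smul, Matrix.smul_mul, smul_smul, sq, Matrix.mul_assoc,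
      add_comm]
  have hy : y = L.mulVec (Sum.elim Yl Yr) := by
    show Sum.elim Yl (ρ • (Eᵀ.mulVec Yl) + Yr) = _
    rw [hL, Matrix.fromBlocks_mulVec]
    congr 1 <;> simp [Matrix.smul_mulVec]
  have hCovInv : Cov⁻¹ = Liᵀ * (D⁻¹ * Li) := by
    rw [hCov, Matrix.mul_inv_rev, Matrix.mul_inv_rev, hLinv,
      ← Matrix.transpose_nonsing_inv, hLinv]
  rw [hCovInv, hy]
  rw [← Matrix.mulVec_mulVec, Matrix.dotProduct_mulVec, Matrix.vecMul_transpose,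
    Matrix.mulVec_mulVec, hLiL, Matrix.one_mulVec, Matrix.mulVec_mulVec,
    Matrix.mul_assoc, hLiL, mul_one, hDinv, Matrix.fromBlocks_mulVec]
  simp [sumElim_dotProduct_sumElim]
end

section
/- Let Nl and Nh be finite index types, ρ : ℝ, Kl : Matrix Nl Nl ℝ, Kr : Matrix Nh Nh ℝ, and E : Matrix Nl Nh ℝ arbitrary real matrices. Define Σ = fromBlocks Kl (ρ • (Kl * E)) (ρ • (Eᵀ * Kl)) (ρ² • (Eᵀ * Kl * E) + Kr). Then det Σ = det Kl * det Kr. -/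
open Matrix

theorem ar_joint_covariance_det {Nl Nh : Type*}
    [Fintype Nl] [Fintype Nh] [DecidableEq Nl] [DecidableEq Nh]
    (ρ : ℝ) (Kl : Matrix Nl Nl ℝ) (Kr : Matrix Nh Nh ℝ) (E : Matrix Nl Nh ℝ) :
    (fromBlocks Kl (ρ • (Kl * E)) (ρ • (Eᵀ * Kl)) (ρ ^ 2 • (Eᵀ * Kl * E) + Kr)).det =
      Kl.det * Kr.det := by
  have h : fromBlocks Kl (ρ • (Kl * E)) (ρ • (Eᵀ * Kl)) (ρ ^ 2 • (Eᵀ * Kl * E) + Kr)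
      = fromBlocks 1 0 (ρ • Eᵀ) 1 * fromBlocks Kl (ρ • (Kl * E)) 0 Kr := by
    simp [fromBlocks_multiply, Matrix.smul_mul, Matrix.mul_smul, Matrix.mul_assoc,
      smul_smul, sq]
  rw [h, det_mul, det_fromBlocks_zero₂₁, det_fromBlocks_zero₁₂]
  simp
end

section
/- Let Nl and Nh be finite index types, ρ : ℝ, Kl : Matrix Nl Nl ℝ and Kr : Matrix Nh Nh ℝ invertible real matrices, and E : Matrix Nl Nh ℝ. Define Σ = fromBlocks Kl (ρ • (Kl * E)) (ρ • (Eᵀ * Kl)) (ρ² • (Eᵀ * Kl * E) + Kr). Let kl⋆ : Matrix Unit Nl ℝ and kr⋆ : Matrix Unit Nh ℝ be row vectors, and let C : Matrix Unit (Nl ⊕ Nh) ℝ be the block row whose first block is ρ • kl⋆ and whose second block is ρ² • (kl⋆ * E) + kr⋆. For vectors Yl : Nl → ℝ, Yr : Nh → ℝ let y : (Nl ⊕ Nh) → ℝ have first block Yl and second block ρ • (Eᵀ.mulVec Yl) + Yr. Then C.mulVec (Σ⁻¹.mulVec y) = ρ • ((kl⋆ * Kl⁻¹).mulVec Yl) +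 (kr⋆ * Kr⁻¹).mulVec Yr (as functions Unit → ℝ). -/
open Matrix

theorem ar_posterior_mean {Nl Nh : Type*}
    [Fintype Nl] [Fintype Nh] [DecidableEq Nl] [DecidableEq Nh]
    (ρ : ℝ) (Kl : Matrix Nl Nl ℝ) (Kr : Matrix Nh Nh ℝ) (E : Matrix Nl Nh ℝ)
    (hKl : IsUnit Kl.det) (hKr : IsUnit Kr.det)
    (kls : Matrix Unit Nl ℝ) (krs : Matrix Unit Nh ℝ)
    (Yl : Nl → ℝ) (Yr : Nh → ℝ) :
    let Cov : Matrix (Nl ⊕ Nh) (Nl ⊕ Nh) ℝ :=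
      fromBlocks Kl (ρ • (Kl * E)) (ρ • (Eᵀ * Kl)) (ρ ^ 2 • (Eᵀ * Kl * E) + Kr)
    let C : Matrix Unit (Nl ⊕ Nh) ℝ :=
      fromCols (ρ • kls) (ρ ^ 2 • (kls * E) + krs)
    let y : (Nl ⊕ Nh) → ℝ := Sum.elim Yl (ρ • (Eᵀ.mulVec Yl) + Yr)
    C.mulVec (Cov⁻¹.mulVec y) =
      ρ • ((kls * Kl⁻¹).mulVec Yl) + (krs * Kr⁻¹).mulVec Yr := by
  intro Cov C y
  have hKl1 : ∀ v, Kl *ᵥ (Kl⁻¹ *ᵥ v) = v := fun v => by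
    rw [Matrix.mulVec_mulVec, Matrix.mul_nonsing_inv _ hKl, Matrix.one_mulVec]
  have hKr1 : ∀ v, Kr *ᵥ (Kr⁻¹ *ᵥ v) = v := fun v => by
    rw [Matrix.mulVec_mulVec, Matrix.mul_nonsing_inv _ hKr, Matrix.one_mulVec]
  have hfac : Cov = fromBlocks 1 0 (ρ • Eᵀ) 1 * fromBlocks Kl (ρ • (Kl * E)) 0 Kr := by
    show fromBlocks _ _ _ _ = _
    rw [fromBlocks_multiply]
    simp [Matrix.smul_mul, Matrix.mul_smul, smul_smul, sq, Matrix.mul_assoc]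
  have hdet : IsUnit Cov.det := by
    rw [hfac, det_mul, det_fromBlocks_zero₁₂, det_fromBlocks_zero₂₁]
    simpa using hKl.mul hKr
  have h1 : Kl *ᵥ (Kl⁻¹ *ᵥ Yl - ρ • E *ᵥ (Kr⁻¹ *ᵥ Yr))
      + (ρ • (Kl * E)) *ᵥ (Kr⁻¹ *ᵥ Yr) = Yl := by
    simp only [Matrix.mulVec_sub, Matrix.mulVec_smul, Matrix.smul_mulVec,
      ← Matrix.mulVec_mulVec, hKl1]
    abel
  have h2 : (ρ • (Eᵀ * Kl)) *ᵥ (Kl⁻¹ *ᵥ Yl - ρ • E *ᵥ (Kr⁻¹ *ᵥ Yr))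
      + (ρ ^ 2 • (Eᵀ * Kl * E) + Kr) *ᵥ (Kr⁻¹ *ᵥ Yr) = ρ • (Eᵀ *ᵥ Yl) + Yr := by
    simp only [Matrix.mulVec_sub, Matrix.mulVec_smul, Matrix.smul_mulVec,
      Matrix.add_mulVec, ← Matrix.mulVec_mulVec, hKl1, hKr1, smul_sub, smul_smul, sq]
    abel
  have hCw : Cov.mulVec (Sum.elim (Kl⁻¹ *ᵥ Yl - ρ • E *ᵥ (Kr⁻¹ *ᵥ Yr)) (Kr⁻¹ *ᵥ Yr)) = y := by
    show (fromBlocks _ _ _ _).mulVec _ = _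
    rw [fromBlocks_mulVec]
    simp only [Sum.elim_comp_inl, Sum.elim_comp_inr, h1, h2]
    rfl
  have hinv : Cov⁻¹.mulVec y
      = Sum.elim (Kl⁻¹ *ᵥ Yl - ρ • E *ᵥ (Kr⁻¹ *ᵥ Yr)) (Kr⁻¹ *ᵥ Yr) := by
    rw [← hCw, Matrix.mulVec_mulVec, Matrix.nonsing_inv_mul _ hdet, Matrix.one_mulVec]
  rw [hinv]
  show (fromCols _ _).mulVec (Sum.elim _ _) = _
  rw [fromCols_mulVec_sumElim]
  simp only [Matrix.mulVec_sub, Matrix.mulVec_smul, Matrix.smul_mulVec,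
    Matrix.add_mulVec, ← Matrix.mulVec_mulVec, smul_sub, smul_smul, sq]
  abel
end

section
/- Let Nl and Nh be finite index types, ρ : ℝ, Kl : Matrix Nl Nl ℝ and Kr : Matrix Nh Nh ℝ invertible real matrices, E : Matrix Nl Nh ℝ, and row vectors kl⋆ : Matrix Unit Nl ℝ, kr⋆ : Matrix Unit Nh ℝ, and scalars kll, krr : ℝ. Define Σ = fromBlocks Kl (ρ • (Kl * E)) (ρ • (Eᵀ * Kl)) (ρ² • (Eᵀ * Kl * E) + Kr) and the block row C : Matrix Unit (Nl ⊕ Nh) ℝ with first block ρ • kl⋆ and second block ρ² • (kl⋆ * E) + kr⋆. Then the posterior variance matrix satisfies (ρ² * kll + krr) • (1 : Matrix Unit Unit ℝ) - C * Σ⁻¹ * Cᵀ = ρ² • (kll • 1 - kl⋆ * Kl⁻¹ * kl⋆ᵀ) + (krr • 1 - kr⋆ * Kr⁻¹ * kr⋆ᵀ). -/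
open Matrix

theorem ar_posterior_variance {Nl Nh : Type*}
    [Fintype Nl] [Fintype Nh] [DecidableEq Nl] [DecidableEq Nh]
    (ρ : ℝ) (Kl : Matrix Nl Nl ℝ) (Kr : Matrix Nh Nh ℝ) (E : Matrix Nl Nh ℝ)
    (hKl : IsUnit Kl.det) (hKr : IsUnit Kr.det)
    (kls : Matrix Unit Nl ℝ) (krs : Matrix Unit Nh ℝ) (kll krr : ℝ) :
    let Cov : Matrix (Nl ⊕ Nh) (Nl ⊕ Nh) ℝ :=
      fromBlocks Kl (ρ • (Kl * E)) (ρ • (Eᵀ * Kl)) (ρ ^ 2 • (Eᵀ * Kl * E) + Kr)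
    let C : Matrix Unit (Nl ⊕ Nh) ℝ :=
      fromCols (ρ • kls) (ρ ^ 2 • (kls * E) + krs)
    (ρ ^ 2 * kll + krr) • (1 : Matrix Unit Unit ℝ) - C * Cov⁻¹ * Cᵀ =
      ρ ^ 2 • (kll • (1 : Matrix Unit Unit ℝ) - kls * Kl⁻¹ * klsᵀ) +
        (krr • (1 : Matrix Unit Unit ℝ) - krs * Kr⁻¹ * krsᵀ) := by
  intro Cov C
  have hinv : Cov⁻¹ = fromBlocks (Kl⁻¹ + ρ ^ 2 • (E * Kr⁻¹ * Eᵀ)) (-(ρ • (E * Kr⁻¹)))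
      (-(ρ • (Kr⁻¹ * Eᵀ))) Kr⁻¹ := by
    apply inv_eq_right_inv
    show fromBlocks Kl (ρ • (Kl * E)) (ρ • (Eᵀ * Kl)) (ρ ^ 2 • (Eᵀ * Kl * E) + Kr) * _ = 1
    rw [fromBlocks_multiply]
    have h1 : Kl * (Kl⁻¹ + ρ ^ 2 • (E * Kr⁻¹ * Eᵀ)) + ρ • (Kl * E) * -(ρ • (Kr⁻¹ * Eᵀ)) = 1 := by
      simp only [Matrix.mul_add, Matrix.mul_smul, Matrix.smul_mul, Matrix.mul_neg,
        Matrix.neg_mul, smul_smul, ← Matrix.mul_assoc, Matrix.mul_nonsing_inv _ hKl, pow_two]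
      abel
    have h2 : Kl * -(ρ • (E * Kr⁻¹)) + ρ • (Kl * E) * Kr⁻¹ = 0 := by
      simp only [Matrix.mul_neg, Matrix.mul_smul, Matrix.smul_mul, ← Matrix.mul_assoc]
      abel
    have h3 : ρ • (Eᵀ * Kl) * (Kl⁻¹ + ρ ^ 2 • (E * Kr⁻¹ * Eᵀ)) +
        (ρ ^ 2 • (Eᵀ * Kl * E) + Kr) * -(ρ • (Kr⁻¹ * Eᵀ)) = 0 := by
      simp only [Matrix.mul_add, Matrix.add_mul, Matrix.mul_neg, Matrix.mul_smul,
        Matrix.smul_mul, smul_smul, smul_add, smul_neg, ← Matrix.mul_assoc,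
        Matrix.mul_nonsing_inv_cancel_right _ _ hKl, Matrix.mul_nonsing_inv _ hKr,
        Matrix.one_mul]
      ring_nf
      abel
    have h4 : ρ • (Eᵀ * Kl) * -(ρ • (E * Kr⁻¹)) + (ρ ^ 2 • (Eᵀ * Kl * E) + Kr) * Kr⁻¹ = 1 := by
      simp only [Matrix.mul_add, Matrix.add_mul, Matrix.mul_neg, Matrix.mul_smul,
        Matrix.smul_mul, smul_smul, ← Matrix.mul_assoc, Matrix.mul_nonsing_inv _ hKr, pow_two]
      abel
    rw [h1, h2, h3, h4, fromBlocks_one]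
  have key : C * Cov⁻¹ * Cᵀ = ρ ^ 2 • (kls * Kl⁻¹ * klsᵀ) + krs * Kr⁻¹ * krsᵀ := by
    simp only [C, hinv, transpose_fromCols, fromCols_mul_fromBlocks,
      fromCols_mul_fromRows]
    simp only [Matrix.mul_add, Matrix.add_mul, Matrix.mul_neg, Matrix.neg_mul, Matrix.mul_smul,
      Matrix.smul_mul, smul_smul, transpose_smul, transpose_mul, transpose_transpose,
      transpose_add, ← Matrix.mul_assoc, smul_add, smul_neg]
    ring_nf
    abel
  rw [key, add_smul, mul_smul, smul_sub]
  abel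
end

section
/- Let Nl, Nh, dl, dh be finite index types and let Kl : Matrix Nl Nl ℝ, Sl : Matrix dl dl ℝ, Kr : Matrix Nh Nh ℝ, Sr : Matrix dh dh ℝ, E : Matrix Nl Nh ℝ, and W : Matrix dh dl ℝ be arbitrary real matrices. Define the GAR joint covariance block matrix Σ = fromBlocks (Kl ⊗ Sl) ((Kl * E) ⊗ (Sl * Wᵀ)) ((Eᵀ * Kl) ⊗ (W * Sl)) ((Eᵀ * Kl * E) ⊗ (W * Sl * Wᵀ) + Kr ⊗ Sr). Then Σ admits the factorization Σ = L * D * Lᵀ, where L = fromBlocks 1 0 (Eᵀ ⊗ W) 1 and D = fromBlocks (Kl ⊗ Sl) 0 0 (Kr ⊗ Sr). -/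
open Matrix Kronecker

theorem gar_joint_covariance_ldl {Nl Nh dl dh : Type*}
    [Fintype Nl] [Fintype Nh] [Fintype dl] [Fintype dh]
    [DecidableEq Nl] [DecidableEq Nh] [DecidableEq dl] [DecidableEq dh]
    (Kl : Matrix Nl Nl ℝ) (Sl : Matrix dl dl ℝ)
    (Kr : Matrix Nh Nh ℝ) (Sr : Matrix dh dh ℝ)
    (E : Matrix Nl Nh ℝ) (W : Matrix dh dl ℝ) :
    fromBlocks (Kl ⊗ₖ Sl) ((Kl * E) ⊗ₖ (Sl * Wᵀ)) ((Eᵀ * Kl) ⊗ₖ (W * Sl))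
        ((Eᵀ * Kl * E) ⊗ₖ (W * Sl * Wᵀ) + Kr ⊗ₖ Sr) =
      fromBlocks 1 0 (Eᵀ ⊗ₖ W) 1 *
        fromBlocks (Kl ⊗ₖ Sl) 0 0 (Kr ⊗ₖ Sr) *
        (fromBlocks 1 0 (Eᵀ ⊗ₖ W) 1)ᵀ := by
  rw [Matrix.fromBlocks_transpose, fromBlocks_multiply, fromBlocks_multiply]
  simp [← mul_kronecker_mul, Matrix.mul_assoc, ← Matrix.kroneckerMap_transpose, Matrix.transpose_transpose]
end

section
/- Let Nl, Nh, dl, dh be finite index types, let Kl : Matrix Nl Nl ℝ, Sl : Matrix dl dl ℝ, Kr : Matrix Nh Nh ℝ, Sr : Matrix dh dh ℝ be invertible real matrices (their determinants are units), and let E : Matrix Nl Nh ℝ, W : Matrix dh dl ℝ be arbitrary. Define Σ = fromBlocks (Kl ⊗ Sl) ((Kl * E) ⊗ (Sl * Wᵀ)) ((Eᵀ * Kl) ⊗ (W * Sl)) ((Eᵀ * Kl * E) ⊗ (W * Sl * Wᵀ) + Kr ⊗ Sr) and N = fromBlocks (Kl⁻¹ ⊗ Sl⁻¹ + (E * Kr⁻¹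 * Eᵀ) ⊗ (Wᵀ * Sr⁻¹ * W)) (-((E * Kr⁻¹) ⊗ (Wᵀ * Sr⁻¹))) (-((Kr⁻¹ * Eᵀ) ⊗ (Sr⁻¹ * W))) (Kr⁻¹ ⊗ Sr⁻¹). Then Σ * N = 1 and N * Σ = 1; in particular Σ is invertible with Σ⁻¹ = N. -/
open Matrix Kronecker

theorem gar_joint_covariance_inverse {Nl Nh dl dh : Type*}
    [Fintype Nl] [Fintype Nh] [Fintype dl] [Fintype dh]
    [DecidableEq Nl] [DecidableEq Nh] [DecidableEq dl] [DecidableEq dh]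
    (Kl : Matrix Nl Nl ℝ) (Sl : Matrix dl dl ℝ)
    (Kr : Matrix Nh Nh ℝ) (Sr : Matrix dh dh ℝ)
    (E : Matrix Nl Nh ℝ) (W : Matrix dh dl ℝ)
    (hKl : IsUnit Kl.det) (hSl : IsUnit Sl.det)
    (hKr : IsUnit Kr.det) (hSr : IsUnit Sr.det) :
    let Cov : Matrix ((Nl × dl) ⊕ (Nh × dh)) ((Nl × dl) ⊕ (Nh × dh)) ℝ :=
      fromBlocks (Kl ⊗ₖ Sl) ((Kl * E) ⊗ₖ (Sl * Wᵀ)) ((Eᵀ * Kl) ⊗ₖ (W * Sl))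
        ((Eᵀ * Kl * E) ⊗ₖ (W * Sl * Wᵀ) + Kr ⊗ₖ Sr)
    let N : Matrix ((Nl × dl) ⊕ (Nh × dh)) ((Nl × dl) ⊕ (Nh × dh)) ℝ :=
      fromBlocks (Kl⁻¹ ⊗ₖ Sl⁻¹ + (E * Kr⁻¹ * Eᵀ) ⊗ₖ (Wᵀ * Sr⁻¹ * W))
        (-((E * Kr⁻¹) ⊗ₖ (Wᵀ * Sr⁻¹))) (-((Kr⁻¹ * Eᵀ) ⊗ₖ (Sr⁻¹ * W))) (Kr⁻¹ ⊗ₖ Sr⁻¹)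
    Cov * N = 1 ∧ N * Cov = 1 ∧ IsUnit Cov.det ∧ Cov⁻¹ = N := by
  intro Cov N
  have hKl1 : Kl * Kl⁻¹ = 1 := Matrix.mul_nonsing_inv _ hKl
  have hKl2 : Kl⁻¹ * Kl = 1 := Matrix.nonsing_inv_mul _ hKl
  have hSl1 : Sl * Sl⁻¹ = 1 := Matrix.mul_nonsing_inv _ hSl
  have hSl2 : Sl⁻¹ * Sl = 1 := Matrix.nonsing_inv_mul _ hSl
  have hKr1 : Kr * Kr⁻¹ = 1 := Matrix.mul_nonsing_inv _ hKr
  have hKr2 : Kr⁻¹ * Kr = 1 := Matrix.nonsing_inv_mul _ hKr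
  have hSr1 : Sr * Sr⁻¹ = 1 := Matrix.mul_nonsing_inv _ hSr
  have hSr2 : Sr⁻¹ * Sr = 1 := Matrix.nonsing_inv_mul _ hSr
  have h1 : Cov * N = 1 := by
    show Matrix.fromBlocks _ _ _ _ * Matrix.fromBlocks _ _ _ _ = 1
    rw [Matrix.fromBlocks_multiply, ← Matrix.fromBlocks_one]
    congr 1 <;>
      simp [Matrix.mul_add, Matrix.add_mul, Matrix.mul_neg, Matrix.neg_mul,
        ← Matrix.mul_kronecker_mul, Matrix.mul_assoc,
        Matrix.mul_nonsing_inv_cancel_left _ _ hKl, Matrix.nonsing_inv_mul_cancel_left _ _ hKl,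
        Matrix.mul_nonsing_inv_cancel_left _ _ hSl, Matrix.nonsing_inv_mul_cancel_left _ _ hSl,
        Matrix.mul_nonsing_inv_cancel_left _ _ hKr, Matrix.nonsing_inv_mul_cancel_left _ _ hKr,
        Matrix.mul_nonsing_inv_cancel_left _ _ hSr, Matrix.nonsing_inv_mul_cancel_left _ _ hSr,
        hKl1, hSl1, hKr1, hSr1, hKl2, hSl2, hKr2, hSr2,
        Matrix.one_kronecker_one] <;> abel_nf <;> rw [Matrix.fromBlocks_one]
  have h2 : N * Cov = 1 := by
    show Matrix.fromBlocks _ _ _ _ * Matrix.fromBlocks _ _ _ _ = 1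
    rw [Matrix.fromBlocks_multiply, ← Matrix.fromBlocks_one]
    congr 1 <;>
      simp [Matrix.mul_add, Matrix.add_mul, Matrix.mul_neg, Matrix.neg_mul,
        ← Matrix.mul_kronecker_mul, Matrix.mul_assoc,
        Matrix.mul_nonsing_inv_cancel_left _ _ hKl, Matrix.nonsing_inv_mul_cancel_left _ _ hKl,
        Matrix.mul_nonsing_inv_cancel_left _ _ hSl, Matrix.nonsing_inv_mul_cancel_left _ _ hSl,
        Matrix.mul_nonsing_inv_cancel_left _ _ hKr, Matrix.nonsing_inv_mul_cancel_left _ _ hKr,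
        Matrix.mul_nonsing_inv_cancel_left _ _ hSr, Matrix.nonsing_inv_mul_cancel_left _ _ hSr,
        hKl1, hSl1, hKr1, hSr1, hKl2, hSl2, hKr2, hSr2,
        Matrix.one_kronecker_one] <;> abel_nf <;> rw [Matrix.fromBlocks_one]
  exact ⟨h1, h2, Matrix.isUnit_det_of_left_inverse h2, Matrix.inv_eq_right_inv h1⟩
end

section
/- Let Nl, Nh, dl, dh be finite index types, Kl : Matrix Nl Nl ℝ, Sl : Matrix dl dl ℝ, Kr : Matrix Nh Nh ℝ, Sr : Matrix dh dh ℝ invertible real matrices, and E : Matrix Nl Nh ℝ, W : Matrix dh dl ℝ arbitrary. Define Σ = fromBlocks (Kl ⊗ Sl) ((Kl * E) ⊗ (Sl * Wᵀ)) ((Eᵀ * Kl) ⊗ (W * Sl)) ((Eᵀ * Kl * E) ⊗ (W * Sl * Wᵀ) + Kr ⊗ Sr). For vectors yl : (Nl × dl) → ℝ and yr : (Nh × dh) → ℝ, let y : ((Nl × dl) ⊕ (Nh × dh)) → ℝ have first block yl and second block (Eᵀ ⊗ W).mulVec yl + yr. Then y ⬝ᵥ (Σ⁻¹.mulVec y)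 = yl ⬝ᵥ ((Kl⁻¹ ⊗ Sl⁻¹).mulVec yl) + yr ⬝ᵥ ((Kr⁻¹ ⊗ Sr⁻¹).mulVec yr). -/
open Matrix Kronecker

theorem gar_quadratic_form_decomposition {Nl Nh dl dh : Type*}
    [Fintype Nl] [Fintype Nh] [Fintype dl] [Fintype dh]
    [DecidableEq Nl] [DecidableEq Nh] [DecidableEq dl] [DecidableEq dh]
    (Kl : Matrix Nl Nl ℝ) (Sl : Matrix dl dl ℝ)
    (Kr : Matrix Nh Nh ℝ) (Sr : Matrix dh dh ℝ)
    (E : Matrix Nl Nh ℝ) (W : Matrix dh dl ℝ)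
    (hKl : IsUnit Kl.det) (hSl : IsUnit Sl.det)
    (hKr : IsUnit Kr.det) (hSr : IsUnit Sr.det)
    (yl : (Nl × dl) → ℝ) (yr : (Nh × dh) → ℝ) :
    let Cov : Matrix ((Nl × dl) ⊕ (Nh × dh)) ((Nl × dl) ⊕ (Nh × dh)) ℝ :=
      fromBlocks (Kl ⊗ₖ Sl) ((Kl * E) ⊗ₖ (Sl * Wᵀ)) ((Eᵀ * Kl) ⊗ₖ (W * Sl))
        ((Eᵀ * Kl * E) ⊗ₖ (W * Sl * Wᵀ) + Kr ⊗ₖ Sr)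
    let y : ((Nl × dl) ⊕ (Nh × dh)) → ℝ :=
      Sum.elim yl ((Eᵀ ⊗ₖ W).mulVec yl + yr)
    y ⬝ᵥ (Cov⁻¹.mulVec y) =
      yl ⬝ᵥ ((Kl⁻¹ ⊗ₖ Sl⁻¹).mulVec yl) + yr ⬝ᵥ ((Kr⁻¹ ⊗ₖ Sr⁻¹).mulVec yr) := by
  intro Cov y
  set A : Matrix (Nl × dl) (Nl × dl) ℝ := Kl ⊗ₖ Sl with hAdef
  set C : Matrix (Nh × dh) (Nh × dh) ℝ := Kr ⊗ₖ Sr with hCdef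
  set B : Matrix (Nh × dh) (Nl × dl) ℝ := Eᵀ ⊗ₖ W with hBdef
  have hA : IsUnit A.det := by
    rw [hAdef, det_kronecker]; exact (hKl.pow _).mul (hSl.pow _)
  have hC : IsUnit C.det := by
    rw [hCdef, det_kronecker]; exact (hKr.pow _).mul (hSr.pow _)
  have hBt : Bᵀ = E ⊗ₖ Wᵀ := by
    ext ⟨i, k⟩ ⟨j, l⟩
    simp [hBdef, Matrix.transpose_apply, Matrix.kroneckerMap_apply]
  set L : Matrix ((Nl × dl) ⊕ (Nh × dh)) ((Nl × dl) ⊕ (Nh × dh)) ℝ :=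
    fromBlocks 1 0 B 1 with hLdef
  set Lt : Matrix ((Nl × dl) ⊕ (Nh × dh)) ((Nl × dl) ⊕ (Nh × dh)) ℝ :=
    fromBlocks 1 Bᵀ 0 1 with hLtdef
  set D : Matrix ((Nl × dl) ⊕ (Nh × dh)) ((Nl × dl) ⊕ (Nh × dh)) ℝ :=
    fromBlocks A 0 0 C with hDdef
  set Ltinv : Matrix ((Nl × dl) ⊕ (Nh × dh)) ((Nl × dl) ⊕ (Nh × dh)) ℝ :=
    fromBlocks 1 (-Bᵀ) 0 1 with hLtinvdef
  set Linv : Matrix ((Nl × dl) ⊕ (Nh × dh)) ((Nl × dl) ⊕ (Nh × dh)) ℝ :=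
    fromBlocks 1 0 (-B) 1 with hLinvdef
  set Dinv : Matrix ((Nl × dl) ⊕ (Nh × dh)) ((Nl × dl) ⊕ (Nh × dh)) ℝ :=
    fromBlocks A⁻¹ 0 0 C⁻¹ with hDinvdef
  have hCov : Cov = L * D * Lt := by
    show fromBlocks _ _ _ _ = _
    rw [hLdef, hDdef, hLtdef, Matrix.fromBlocks_multiply, Matrix.fromBlocks_multiply]
    congr 1 <;>
      simp [hBt, hAdef, hBdef, hCdef, ← Matrix.mul_kronecker_mul, Matrix.mul_assoc, ← Matrix.kroneckerMap_transpose]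
  have hLL : L * Linv = 1 := by
    rw [hLdef, hLinvdef, ← Matrix.fromBlocks_one, Matrix.fromBlocks_multiply]
    simp
  have hLtLt : Lt * Ltinv = 1 := by
    rw [hLtdef, hLtinvdef, ← Matrix.fromBlocks_one, Matrix.fromBlocks_multiply]
    simp
  have hDD : D * Dinv = 1 := by
    rw [hDdef, hDinvdef, ← Matrix.fromBlocks_one, Matrix.fromBlocks_multiply]
    simp [Matrix.mul_nonsing_inv _ hA, Matrix.mul_nonsing_inv _ hC]
  have hCovInv : Cov⁻¹ = Ltinv * Dinv * Linv := by
    apply Matrix.inv_eq_right_inv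
    rw [hCov]
    calc L * D * Lt * (Ltinv * Dinv * Linv)
        = L * (D * ((Lt * Ltinv) * (Dinv * Linv))) := by
          simp only [Matrix.mul_assoc]
      _ = L * (D * Dinv * Linv) := by rw [hLtLt, one_mul, Matrix.mul_assoc]
      _ = 1 := by rw [hDD, one_mul, hLL]
  have hy : y = L.mulVec (Sum.elim yl yr) := by
    rw [hLdef, Matrix.fromBlocks_mulVec]
    simp [y, hBdef]
  have hLinvL : Linv * L = 1 := by
    rw [hLdef, hLinvdef, ← Matrix.fromBlocks_one, Matrix.fromBlocks_multiply]
    simp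
  have hLtT : Lᵀ = Lt := by
    rw [hLdef, hLtdef, Matrix.fromBlocks_transpose]
    simp
  calc y ⬝ᵥ (Cov⁻¹.mulVec y)
      = (L.mulVec (Sum.elim yl yr)) ⬝ᵥ
          ((Ltinv * Dinv * Linv).mulVec (L.mulVec (Sum.elim yl yr))) := by
        rw [hCovInv, hy]
    _ = (L.mulVec (Sum.elim yl yr)) ⬝ᵥ ((Ltinv * Dinv).mulVec (Sum.elim yl yr)) := by
        rw [Matrix.mulVec_mulVec, Matrix.mul_assoc, hLinvL, Matrix.mul_one]
    _ = (Sum.elim yl yr) ⬝ᵥ ((Lᵀ * (Ltinv * Dinv)).mulVec (Sum.elim yl yr)) := by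
        rw [Matrix.dotProduct_mulVec, Matrix.dotProduct_mulVec]
        congr 1
        rw [← Matrix.vecMul_transpose]
        simp only [Matrix.vecMul_vecMul]
    _ = (Sum.elim yl yr) ⬝ᵥ (Dinv.mulVec (Sum.elim yl yr)) := by
        rw [hLtT, ← Matrix.mul_assoc, hLtLt, one_mul]
    _ = yl ⬝ᵥ ((Kl⁻¹ ⊗ₖ Sl⁻¹).mulVec yl) + yr ⬝ᵥ ((Kr⁻¹ ⊗ₖ Sr⁻¹).mulVec yr) := by
        rw [hDinvdef, Matrix.fromBlocks_mulVec, sumElim_dotProduct_sumElim,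
          hAdef, hCdef, Matrix.inv_kronecker, Matrix.inv_kronecker]
        simp
end

section
/- Let Nl, Nh, dl, dh be finite index types and Kl : Matrix Nl Nl ℝ, Sl : Matrix dl dl ℝ, Kr : Matrix Nh Nh ℝ, Sr : Matrix dh dh ℝ, E : Matrix Nl Nh ℝ, W : Matrix dh dl ℝ arbitrary real matrices. Define Σ = fromBlocks (Kl ⊗ Sl) ((Kl * E) ⊗ (Sl * Wᵀ)) ((Eᵀ * Kl) ⊗ (W * Sl)) ((Eᵀ * Kl * E) ⊗ (W * Sl * Wᵀ) + Kr ⊗ Sr). Then det Σ = det (Kl ⊗ Sl) * det (Kr ⊗ Sr). -/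
open Matrix Kronecker

theorem gar_joint_covariance_det {Nl Nh dl dh : Type*}
    [Fintype Nl] [Fintype Nh] [Fintype dl] [Fintype dh]
    [DecidableEq Nl] [DecidableEq Nh] [DecidableEq dl] [DecidableEq dh]
    (Kl : Matrix Nl Nl ℝ) (Sl : Matrix dl dl ℝ)
    (Kr : Matrix Nh Nh ℝ) (Sr : Matrix dh dh ℝ)
    (E : Matrix Nl Nh ℝ) (W : Matrix dh dl ℝ) :
    (fromBlocks (Kl ⊗ₖ Sl) ((Kl * E) ⊗ₖ (Sl * Wᵀ)) ((Eᵀ * Kl) ⊗ₖ (W * Sl))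
        ((Eᵀ * Kl * E) ⊗ₖ (W * Sl * Wᵀ) + Kr ⊗ₖ Sr)).det =
      (Kl ⊗ₖ Sl).det * (Kr ⊗ₖ Sr).det := by
  set A := Kl ⊗ₖ Sl with hA
  set D := Kr ⊗ₖ Sr with hD
  set M := E ⊗ₖ Wᵀ with hM
  have h1 : (Kl * E) ⊗ₖ (Sl * Wᵀ) = A * M := Matrix.mul_kronecker_mul _ _ _ _
  have h2 : (Eᵀ * Kl) ⊗ₖ (W * Sl) = Mᵀ * A := by
    rw [hM, ← Matrix.kroneckerMap_transpose, Matrix.transpose_transpose,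
      Matrix.mul_kronecker_mul]
  have h3 : (Eᵀ * Kl * E) ⊗ₖ (W * Sl * Wᵀ) = Mᵀ * A * M := by
    rw [Matrix.mul_kronecker_mul, h2]
  have key : fromBlocks A (A * M) (Mᵀ * A) (Mᵀ * A * M + D) =
      fromBlocks 1 0 Mᵀ 1 * (fromBlocks A (A * M) 0 D) := by
    rw [Matrix.fromBlocks_multiply]
    simp [Matrix.mul_assoc]
  rw [h1, h2, h3, key, Matrix.det_mul, Matrix.det_fromBlocks_zero₂₁,
    Matrix.det_fromBlocks_zero₁₂, Matrix.det_one]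
  simp
end

section
/- Let Nl, Nh, dl, dh be finite index types, Kl : Matrix Nl Nl ℝ, Sl : Matrix dl dl ℝ, Kr : Matrix Nh Nh ℝ, Sr : Matrix dh dh ℝ invertible real matrices, E : Matrix Nl Nh ℝ, W : Matrix dh dl ℝ arbitrary, and Σ = fromBlocks (Kl ⊗ Sl) ((Kl * E) ⊗ (Sl * Wᵀ)) ((Eᵀ * Kl) ⊗ (W * Sl)) ((Eᵀ * Kl * E) ⊗ (W * Sl * Wᵀ) + Kr ⊗ Sr). Let kl⋆ : Matrix Unit Nl ℝ and kr⋆ : Matrix Unit Nh ℝ be row vectors and let C : Matrix (Unit × dh) ((Nl × dl) ⊕ (Nh × dh)) ℝ be the block row with first block kl⋆ ⊗ (W * Sl) and second block (kl⋆ * E) ⊗ (W * Sl * Wᵀ) + kr⋆ ⊗ Sr. For vectors yl : (Nl × dl) → ℝ, yr : (Nh × dh) → ℝ, let y have first block yl and second block (Eᵀ ⊗ W).mulVec yl + yr. Then C.mulVec (Σ⁻¹.mulVec y) = ((kl⋆ * Kl⁻¹) ⊗ W).mulVec yl + ((kr⋆ * Kr⁻¹) ⊗ (1 : Matrix dh dh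 ℝ)).mulVec yr. -/
open Matrix Kronecker

theorem gar_posterior_mean {Nl Nh dl dh : Type*}
    [Fintype Nl] [Fintype Nh] [Fintype dl] [Fintype dh]
    [DecidableEq Nl] [DecidableEq Nh] [DecidableEq dl] [DecidableEq dh]
    (Kl : Matrix Nl Nl ℝ) (Sl : Matrix dl dl ℝ)
    (Kr : Matrix Nh Nh ℝ) (Sr : Matrix dh dh ℝ)
    (E : Matrix Nl Nh ℝ) (W : Matrix dh dl ℝ)
    (hKl : IsUnit Kl.det) (hSl : IsUnit Sl.det)
    (hKr : IsUnit Kr.det) (hSr : IsUnit Sr.det)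
    (kls : Matrix Unit Nl ℝ) (krs : Matrix Unit Nh ℝ)
    (yl : (Nl × dl) → ℝ) (yr : (Nh × dh) → ℝ) :
    let Cov : Matrix ((Nl × dl) ⊕ (Nh × dh)) ((Nl × dl) ⊕ (Nh × dh)) ℝ :=
      fromBlocks (Kl ⊗ₖ Sl) ((Kl * E) ⊗ₖ (Sl * Wᵀ)) ((Eᵀ * Kl) ⊗ₖ (W * Sl))
        ((Eᵀ * Kl * E) ⊗ₖ (W * Sl * Wᵀ) + Kr ⊗ₖ Sr)
    let C : Matrix (Unit × dh) ((Nl × dl) ⊕ (Nh × dh)) ℝ :=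
      fromCols (kls ⊗ₖ (W * Sl)) ((kls * E) ⊗ₖ (W * Sl * Wᵀ) + krs ⊗ₖ Sr)
    let y : ((Nl × dl) ⊕ (Nh × dh)) → ℝ :=
      Sum.elim yl ((Eᵀ ⊗ₖ W).mulVec yl + yr)
    C.mulVec (Cov⁻¹.mulVec y) =
      ((kls * Kl⁻¹) ⊗ₖ W).mulVec yl +
        ((krs * Kr⁻¹) ⊗ₖ (1 : Matrix dh dh ℝ)).mulVec yr := by
  intro Cov C y
  set A : Matrix (Nl × dl) (Nl × dl) ℝ := Kl ⊗ₖ Sl with hA_def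
  set B : Matrix (Nh × dh) (Nh × dh) ℝ := Kr ⊗ₖ Sr with hB_def
  set M : Matrix (Nl × dl) (Nh × dh) ℝ := E ⊗ₖ Wᵀ with hM_def
  set ρ : Matrix (Unit × dh) (Nl × dl) ℝ := (kls * Kl⁻¹) ⊗ₖ W with hρ_def
  set σ : Matrix (Unit × dh) (Nh × dh) ℝ := (krs * Kr⁻¹) ⊗ₖ (1 : Matrix dh dh ℝ)
    with hσ_def
  have hA : IsUnit A.det := by
    rw [hA_def, det_kronecker]; exact (hKl.pow _).mul (hSl.pow _)
  have hB : IsUnit B.det := by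
    rw [hB_def, det_kronecker]; exact (hKr.pow _).mul (hSr.pow _)
  have hAA : A * A⁻¹ = 1 := mul_nonsing_inv _ hA
  have hBB : B * B⁻¹ = 1 := mul_nonsing_inv _ hB
  have hMT : Mᵀ = Eᵀ ⊗ₖ W := by
    rw [hM_def]; ext ⟨i, j⟩ ⟨k, l⟩; simp [kroneckerMap_apply, transpose_apply]
  -- Cov in terms of A, B, M
  have hCov : Cov = fromBlocks A (A * M) (Mᵀ * A) (Mᵀ * A * M + B) := by
    show Cov = _
    rw [hMT, hA_def, hB_def, hM_def, ← mul_kronecker_mul, ← mul_kronecker_mul,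
      ← mul_kronecker_mul]
  -- candidate inverse
  have hCovInv : Cov⁻¹ =
      fromBlocks (A⁻¹ + M * B⁻¹ * Mᵀ) (-(M * B⁻¹)) (-(B⁻¹ * Mᵀ)) B⁻¹ := by
    apply inv_eq_right_inv
    rw [hCov, fromBlocks_multiply]
    have h11 : A * (A⁻¹ + M * B⁻¹ * Mᵀ) + A * M * -(B⁻¹ * Mᵀ) = 1 := by
      rw [Matrix.mul_add, hAA]
      simp only [Matrix.mul_neg, ← Matrix.mul_assoc]
      abel
    have h12 : A * -(M * B⁻¹) + A * M * B⁻¹ = 0 := by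
      simp only [Matrix.mul_neg, ← Matrix.mul_assoc]
      abel
    have h21 : Mᵀ * A * (A⁻¹ + M * B⁻¹ * Mᵀ) + (Mᵀ * A * M + B) * -(B⁻¹ * Mᵀ) = 0 := by
      rw [Matrix.mul_add, Matrix.mul_assoc Mᵀ A A⁻¹, hAA, Matrix.mul_one,
        Matrix.mul_neg, Matrix.add_mul, ← Matrix.mul_assoc B B⁻¹ Mᵀ, hBB,
        Matrix.one_mul]
      simp only [← Matrix.mul_assoc, neg_add]
      abel
    have h22 : Mᵀ * A * -(M * B⁻¹) + (Mᵀ * A * M + B) * B⁻¹ = 1 := by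
      rw [Matrix.add_mul, hBB]
      simp only [Matrix.mul_neg, ← Matrix.mul_assoc]
      abel
    rw [h11, h12, h21, h22, ← fromBlocks_one]
  -- C in terms of ρ, σ
  have hC1 : kls ⊗ₖ (W * Sl) = ρ * A := by
    rw [hρ_def, hA_def, ← mul_kronecker_mul, Matrix.mul_assoc,
      nonsing_inv_mul _ hKl, Matrix.mul_one]
  have hC2 : (kls * E) ⊗ₖ (W * Sl * Wᵀ) = ρ * A * M := by
    rw [hρ_def, hA_def, hM_def, ← mul_kronecker_mul, ← mul_kronecker_mul,
      Matrix.mul_assoc kls Kl⁻¹ Kl, nonsing_inv_mul _ hKl, Matrix.mul_one]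
  have hC3 : krs ⊗ₖ Sr = σ * B := by
    rw [hσ_def, hB_def, ← mul_kronecker_mul, Matrix.mul_assoc,
      nonsing_inv_mul _ hKr, Matrix.mul_one, Matrix.one_mul]
  have hC : C = fromCols (ρ * A) (ρ * A * M + σ * B) := by
    show fromCols _ _ = _
    rw [hC1, hC2, hC3]
  -- compute C * Cov⁻¹
  have hkey : C * Cov⁻¹ = fromCols (ρ - σ * Mᵀ) σ := by
    have e1 : ρ * A * (A⁻¹ + M * B⁻¹ * Mᵀ) + (ρ * A * M + σ * B) * -(B⁻¹ * Mᵀ)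
        = ρ - σ * Mᵀ := by
      simp only [Matrix.mul_add, Matrix.mul_neg, Matrix.add_mul, neg_add,
        ← Matrix.mul_assoc]
      rw [Matrix.mul_assoc ρ A A⁻¹, hAA, Matrix.mul_one,
        Matrix.mul_assoc σ B B⁻¹, hBB, Matrix.mul_one]
      abel
    have e2 : ρ * A * -(M * B⁻¹) + (ρ * A * M + σ * B) * B⁻¹ = σ := by
      simp only [Matrix.mul_neg, Matrix.add_mul, ← Matrix.mul_assoc]
      rw [Matrix.mul_assoc σ B B⁻¹, hBB, Matrix.mul_one]
      abel
    rw [hC, hCovInv, fromCols_mul_fromBlocks, e1, e2]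
  calc C.mulVec (Cov⁻¹.mulVec y) = (C * Cov⁻¹).mulVec y := by
        rw [Matrix.mulVec_mulVec]
    _ = (fromCols (ρ - σ * Mᵀ) σ).mulVec (Sum.elim yl (Mᵀ.mulVec yl + yr)) := by
        rw [hkey, hMT]
    _ = ρ.mulVec yl + σ.mulVec yr := by
        rw [fromCols_mulVec_sumElim, Matrix.sub_mulVec, Matrix.mulVec_add,
          ← Matrix.mulVec_mulVec]
        abel
end

section
/- Let n, d : ℕ, let A : Matrix (Fin n) (Fin n) ℝ and D : Matrix (Fin d) (Fin d) ℝ be symmetric positive definite matrices, let Ψ : Matrix (Fin n) (Fin d) ℝ, φ : Fin n → ℝ, and m : Fin d → ℝ. Then ∫ z : (Fin d → ℝ), Real.exp (-(1/2) * (A⁻¹.mulVec (φ - Ψ.mulVec z) ⬝ᵥ (φ - Ψ.mulVec z))) * Real.exp (-(1/2) * (D⁻¹.mulVec (z - m) ⬝ᵥ (z - m))) dz = (2 * π) ^ ((d : ℝ) / 2) * (det (Ψᵀ * A⁻¹ * Ψ + D⁻¹)) ^ (-(1/2) : ℝ) * Real.exp (-(1/2) * ((A + Ψ * D * Ψᵀ)⁻¹.mulVec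 (φ - Ψ.mulVec m) ⬝ᵥ (φ - Ψ.mulVec m))), where the integral is with respect to the Lebesgue (product) measure on Fin d → ℝ. -/
open Matrix MeasureTheory Real

lemma gauss_std (d : ℕ) :
    ∫ y : Fin d → ℝ, Real.exp (-(1/2) * (y ⬝ᵥ y)) = (2 * π) ^ ((d : ℝ) / 2) := by
  have h1 : ∀ y : Fin d → ℝ, Real.exp (-(1/2) * (y ⬝ᵥ y)) =
      ∏ i, Real.exp (-(1/2) * (y i ^ 2)) := by
    intro y
    rw [← Real.exp_sum]
    congr 1
    simp [dotProduct, Finset.mul_sum, sq]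
  simp_rw [h1]
  rw [MeasureTheory.volume_pi]
  rw [MeasureTheory.integral_fintype_prod_eq_pow (ι := Fin d)
    (fun x : ℝ => Real.exp (-(1/2) * x ^ 2))]
  have h2 : (∫ x : ℝ, Real.exp (-(1/2) * x ^ 2)) = Real.sqrt (2 * π) := by
    have := integral_gaussian (1/2)
    simp only [neg_mul] at this ⊢
    rw [this]
    rw [show π / (1/2 : ℝ) = 2 * π by ring]
  rw [h2, Fintype.card_fin]
  rw [Real.sqrt_eq_rpow]
  rw [← Real.rpow_natCast ((2*π) ^ ((1:ℝ)/2)) d, ← Real.rpow_mul (by positivity)]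
  ring_nf

open scoped MatrixOrder in
lemma gauss_posdef {d : ℕ} {B : Matrix (Fin d) (Fin d) ℝ} (hB : B.PosDef) :
    ∫ z : Fin d → ℝ, Real.exp (-(1/2) * (B.mulVec z ⬝ᵥ z)) =
      (2 * π) ^ ((d : ℝ) / 2) * B.det ^ (-(1/2) : ℝ) := by
  classical
  set S := CFC.sqrt B with hS
  have hSS : S * S = B := CFC.sqrt_mul_sqrt_self B hB.posSemidef.nonneg
  have hSsymm : Sᵀ = S := by
    have := (CFC.sqrt_nonneg B).posSemidef.isHermitian
    rwa [IsHermitian, conjTranspose_eq_transpose_of_trivial] at this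
  have hdet : S.det * S.det = B.det := by rw [← det_mul, hSS]
  have hdetB : 0 < B.det := hB.det_pos
  have hdetS : S.det ≠ 0 := by
    intro h; rw [h, mul_zero] at hdet; exact hdetB.ne' hdet.symm
  have habs : |S.det| = Real.sqrt B.det := by
    rw [← hdet, Real.sqrt_mul_self_eq_abs]
  -- quadratic form via sqrt
  have hquad : ∀ z : Fin d → ℝ, B.mulVec z ⬝ᵥ z = S.mulVec z ⬝ᵥ S.mulVec z := by
    intro z
    rw [← hSS, ← mulVec_mulVec, dotProduct_comm, dotProduct_mulVec, ← mulVec_transpose,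
      hSsymm]
  simp_rw [hquad]
  -- change of variables
  have hmap : Measure.map (Matrix.toLin' S) volume
      = ENNReal.ofReal |S.det⁻¹| • volume := abs_inv S.det ▸
    Real.map_matrix_volume_pi_eq_smul_volume_pi hdetS
  have hcont : Continuous fun y : Fin d → ℝ => Real.exp (-(1/2) * (y ⬝ᵥ y)) := by
    continuity
  have hint : ∫ z : Fin d → ℝ, Real.exp (-(1/2) * (S.mulVec z ⬝ᵥ S.mulVec z))
      = ∫ y : Fin d → ℝ, Real.exp (-(1/2) * (y ⬝ᵥ y))
          ∂(Measure.map (Matrix.toLin' S) volume) := by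
    rw [MeasureTheory.integral_map]
    · simp_rw [Matrix.toLin'_apply]
    · exact (LinearMap.continuous_on_pi _).aemeasurable
    · exact hcont.aestronglyMeasurable
  rw [hint, hmap, integral_smul_measure, gauss_std d, ENNReal.toReal_ofReal (by positivity), abs_inv, habs]
  rw [smul_eq_mul, mul_comm]
  congr 1
  rw [Real.rpow_neg hdetB.le, Real.sqrt_eq_rpow]

lemma woodbury {n d : ℕ} (A : Matrix (Fin n) (Fin n) ℝ) (hA : A.PosDef)
    (D : Matrix (Fin d) (Fin d) ℝ) (hD : D.PosDef) (Ψ : Matrix (Fin n) (Fin d) ℝ)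
    (hB : (Ψᵀ * A⁻¹ * Ψ + D⁻¹).PosDef) :
    (A + Ψ * D * Ψᵀ)⁻¹ =
      A⁻¹ - A⁻¹ * Ψ * (Ψᵀ * A⁻¹ * Ψ + D⁻¹)⁻¹ * (Ψᵀ * A⁻¹) := by
  set B := Ψᵀ * A⁻¹ * Ψ + D⁻¹ with hBdef
  apply inv_eq_right_inv
  have hA1 : A * A⁻¹ = 1 := mul_nonsing_inv _ hA.det_pos.ne'.isUnit
  have hD1 : D * D⁻¹ = 1 := mul_nonsing_inv _ hD.det_pos.ne'.isUnit
  have hB1 : B * B⁻¹ = 1 := mul_nonsing_inv _ hB.det_pos.ne'.isUnit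
  have e1 : D * (Ψᵀ * A⁻¹ * Ψ) * B⁻¹ = D - B⁻¹ := by
    have h2 : D * (Ψᵀ * A⁻¹ * Ψ) = D * B - 1 := by
      rw [hBdef, mul_add, hD1]; abel
    rw [h2, sub_mul, one_mul, mul_assoc, hB1, mul_one]
  have expand : (A + Ψ * D * Ψᵀ) * (A⁻¹ - A⁻¹ * Ψ * B⁻¹ * (Ψᵀ * A⁻¹)) =
      A * A⁻¹ - (A * A⁻¹) * (Ψ * (B⁻¹ * (Ψᵀ * A⁻¹)))
        + (Ψ * D * Ψᵀ * A⁻¹ - Ψ * ((D * (Ψᵀ * A⁻¹ * Ψ) * B⁻¹) * (Ψᵀ * A⁻¹))) := by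
    simp only [Matrix.mul_sub, Matrix.sub_mul, Matrix.mul_add, Matrix.add_mul,
      Matrix.mul_assoc]
    abel
  rw [expand, hA1, e1]
  simp only [Matrix.sub_mul, Matrix.mul_sub, Matrix.mul_add, Matrix.add_mul,
    Matrix.mul_assoc, Matrix.one_mul, Matrix.mul_one]
  abel

lemma dot_swap {k l : ℕ} (M : Matrix (Fin k) (Fin l) ℝ) (u : Fin l → ℝ) (v : Fin k → ℝ) :
    M.mulVec u ⬝ᵥ v = u ⬝ᵥ Mᵀ.mulVec v := by
  rw [dotProduct_comm, dotProduct_mulVec, ← mulVec_transpose, dotProduct_comm]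

theorem gaussian_marginalization (n d : ℕ)
    (A : Matrix (Fin n) (Fin n) ℝ) (hA : A.PosDef)
    (D : Matrix (Fin d) (Fin d) ℝ) (hD : D.PosDef)
    (Ψ : Matrix (Fin n) (Fin d) ℝ) (φ : Fin n → ℝ) (m : Fin d → ℝ) :
    ∫ z : Fin d → ℝ,
        Real.exp (-(1/2) * (A⁻¹.mulVec (φ - Ψ.mulVec z) ⬝ᵥ (φ - Ψ.mulVec z))) *
          Real.exp (-(1/2) * (D⁻¹.mulVec (z - m) ⬝ᵥ (z - m))) =
      (2 * π) ^ ((d : ℝ) / 2) * (Ψᵀ * A⁻¹ * Ψ + D⁻¹).det ^ (-(1/2) : ℝ) *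
        Real.exp (-(1/2) *
          ((A + Ψ * D * Ψᵀ)⁻¹.mulVec (φ - Ψ.mulVec m) ⬝ᵥ (φ - Ψ.mulVec m))) := by
  classical
  set e := φ - Ψ.mulVec m with he
  set B := Ψᵀ * A⁻¹ * Ψ + D⁻¹ with hBdef
  have hAinv : A⁻¹.PosDef := hA.inv
  have hDinv : D⁻¹.PosDef := hD.inv
  have hB : B.PosDef := by
    refine Matrix.PosDef.posSemidef_add ?_ hDinv
    have := hAinv.posSemidef.conjTranspose_mul_mul_same Ψ
    rwa [conjTranspose_eq_transpose_of_trivial] at this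
  have hAsymm : A⁻¹ᵀ = A⁻¹ := by
    have := hAinv.isHermitian
    rwa [Matrix.IsHermitian, conjTranspose_eq_transpose_of_trivial] at this
  have hBsymm : Bᵀ = B := by
    have := hB.isHermitian
    rwa [Matrix.IsHermitian, conjTranspose_eq_transpose_of_trivial] at this
  have hBinvsymm : B⁻¹ᵀ = B⁻¹ := by rw [transpose_nonsing_inv, hBsymm]
  have hB1 : B * B⁻¹ = 1 := mul_nonsing_inv _ hB.det_pos.ne'.isUnit
  set t := Ψᵀ.mulVec (A⁻¹.mulVec e) with ht
  set ν := B⁻¹.mulVec t with hν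
  set μ := m + ν with hμ
  have hwood : (A + Ψ * D * Ψᵀ)⁻¹ = A⁻¹ - A⁻¹ * Ψ * B⁻¹ * (Ψᵀ * A⁻¹) :=
    woodbury A hA D hD Ψ hB
  -- the scalar completion-of-the-square identity
  have key : ∀ z : Fin d → ℝ,
      (A⁻¹.mulVec (φ - Ψ.mulVec z) ⬝ᵥ (φ - Ψ.mulVec z)) +
        (D⁻¹.mulVec (z - m) ⬝ᵥ (z - m)) =
      B.mulVec (z - μ) ⬝ᵥ (z - μ) + (A + Ψ * D * Ψᵀ)⁻¹.mulVec e ⬝ᵥ e := by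
    intro z
    set w := z - m with hw
    have hw1 : φ - Ψ.mulVec z = e - Ψ.mulVec w := by
      rw [he, hw, Matrix.mulVec_sub]; abel
    have hz : z - μ = w - ν := by rw [hμ, hw]; abel
    have expand2 : ∀ (M : Matrix (Fin d) (Fin d) ℝ) (a b : Fin d → ℝ),
        M.mulVec (a - b) ⬝ᵥ (a - b) =
          M.mulVec a ⬝ᵥ a - M.mulVec a ⬝ᵥ b - M.mulVec b ⬝ᵥ a + M.mulVec b ⬝ᵥ b := by
      intro M a b
      rw [Matrix.mulVec_sub, sub_dotProduct, dotProduct_sub,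
        dotProduct_sub]
      ring
    have expand2' : ∀ (M : Matrix (Fin n) (Fin n) ℝ) (a b : Fin n → ℝ),
        M.mulVec (a - b) ⬝ᵥ (a - b) =
          M.mulVec a ⬝ᵥ a - M.mulVec a ⬝ᵥ b - M.mulVec b ⬝ᵥ a + M.mulVec b ⬝ᵥ b := by
      intro M a b
      rw [Matrix.mulVec_sub, sub_dotProduct, dotProduct_sub,
        dotProduct_sub]
      ring
    have c1 : A⁻¹.mulVec e ⬝ᵥ Ψ.mulVec w = t ⬝ᵥ w := by
      rw [dotProduct_mulVec, ← mulVec_transpose]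
    have c2 : A⁻¹.mulVec (Ψ.mulVec w) ⬝ᵥ e = t ⬝ᵥ w := by
      rw [dot_swap, hAsymm, dot_swap, dotProduct_comm]
    have c3 : A⁻¹.mulVec (Ψ.mulVec w) ⬝ᵥ Ψ.mulVec w = (Ψᵀ * A⁻¹ * Ψ).mulVec w ⬝ᵥ w := by
      rw [dotProduct_mulVec, ← mulVec_transpose]
      simp only [mulVec_mulVec, ← Matrix.mul_assoc]
    have hBν : B.mulVec ν = t := by rw [hν, mulVec_mulVec, hB1, Matrix.one_mulVec]
    have c4 : B.mulVec w ⬝ᵥ ν = t ⬝ᵥ w := by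
      rw [dot_swap, hBsymm, hBν, dotProduct_comm]
    have c5 : B.mulVec w ⬝ᵥ w = (Ψᵀ * A⁻¹ * Ψ).mulVec w ⬝ᵥ w + D⁻¹.mulVec w ⬝ᵥ w := by
      rw [hBdef, Matrix.add_mulVec, add_dotProduct]
    have hti : t ⬝ᵥ ν = A⁻¹.mulVec e ⬝ᵥ e - (A + Ψ * D * Ψᵀ)⁻¹.mulVec e ⬝ᵥ e := by
      have h1 : t ⬝ᵥ ν = (A⁻¹ * Ψ * B⁻¹ * (Ψᵀ * A⁻¹)).mulVec e ⬝ᵥ e := by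
        rw [hν, dotProduct_mulVec, ← mulVec_transpose, hBinvsymm, ht]
        rw [dotProduct_mulVec, ← mulVec_transpose, transpose_transpose]
        rw [dotProduct_mulVec, ← mulVec_transpose, hAsymm]
        simp only [mulVec_mulVec, ← Matrix.mul_assoc]
      rw [h1, hwood, Matrix.sub_mulVec, sub_dotProduct]
      ring
    rw [hw1, hz, expand2' A⁻¹ e (Ψ.mulVec w), expand2 B w ν, c1, c2, c3, c4, hBν,
      hti, c5]
    ring
  -- now the integral
  have step1 : ∀ z : Fin d → ℝ,
      Real.exp (-(1/2) * (A⁻¹.mulVec (φ - Ψ.mulVec z) ⬝ᵥ (φ - Ψ.mulVec z))) *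
        Real.exp (-(1/2) * (D⁻¹.mulVec (z - m) ⬝ᵥ (z - m))) =
      Real.exp (-(1/2) * (B.mulVec (z - μ) ⬝ᵥ (z - μ))) *
        Real.exp (-(1/2) * ((A + Ψ * D * Ψᵀ)⁻¹.mulVec e ⬝ᵥ e)) := by
    intro z
    rw [← Real.exp_add, ← Real.exp_add, ← mul_add, ← mul_add, key z]
  simp_rw [step1]
  rw [MeasureTheory.integral_mul_const]
  rw [integral_sub_right_eq_self
    (fun y : Fin d → ℝ => Real.exp (-(1/2) * (B.mulVec y ⬝ᵥ y))) μ]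
  rw [gauss_posdef hB]
end
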